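/- For every non-zero boolean function f : {0,1}^n → {0,1}, D_ave(f) ≤ log₂(wt(f)) + 2. -/

import Mathlib

/-- Decision trees over `n` boolean variables. -/
inductive DTree (n : ℕ) : Type where
  | leaf : Bool → DTree n
  | node : Fin n → DTree n → DTree n → DTree n

namespace DTree

/-- Evaluate a decision tree on an input. -/
def eval {n : ℕ} : DTree n → (Fin n → Bool) → Bool
  | leaf b, _ => b
  | node i t0 t1, x => if x i then eval t1 x else eval t0 x

/-- Number of queries made on input `x`. -/
def cost {n : ℕ} : DTree n → (Fin n → Bool) → ℕ
  | leaf _, _ => 0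
  | node i t0 t1, x => 1 + (if x i then cost t1 x else cost t0 x)

/-- Depth of a decision tree. -/
def depth {n : ℕ} : DTree n → ℕ
  | leaf _ => 0
  | node _ t0 t1 => 1 + max (depth t0) (depth t1)

end DTree

/-- `T` computes `f` with zero error. -/
def Computes {n : ℕ} (T : DTree n) (f : (Fin n → Bool) → Bool) : Prop :=
  ∀ x, T.eval x = f x

/-- Average cost of a decision tree under the uniform distribution. -/
noncomputable def avgCost {n : ℕ} (T : DTree n) : ℝ :=
  (∑ x : Fin n → Bool, (T.cost x : ℝ)) / 2 ^ n

/-- Average-case deterministic query complexity under the uniform distribution. -/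
noncomputable def Dave {n : ℕ} (f : (Fin n → Bool) → Bool) : ℝ :=
  sInf {c : ℝ | ∃ T : DTree n, Computes T f ∧ avgCost T = c}

/-- Worst-case deterministic query complexity. -/
noncomputable def Dworst {n : ℕ} (f : (Fin n → Bool) → Bool) : ℕ :=
  sInf {d : ℕ | ∃ T : DTree n, Computes T f ∧ T.depth = d}

/-- The weight of a boolean function: the number of inputs mapped to `true`. -/
def wt {n : ℕ} (f : (Fin n → Bool) → Bool) : ℕ :=
  (Finset.univ.filter fun x : Fin n → Bool => f x = true).card

/-- `S` is a certificate of `f` on input `x`. -/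
def IsCert {n : ℕ} (f : (Fin n → Bool) → Bool) (x : Fin n → Bool) (S : Finset (Fin n)) : Prop :=
  ∀ y : Fin n → Bool, (∀ i ∈ S, y i = x i) → f y = f x

/-- Certificate complexity of `f` on input `x`. -/
noncomputable def certC {n : ℕ} (f : (Fin n → Bool) → Bool) (x : Fin n → Bool) : ℕ :=
  sInf {k : ℕ | ∃ S : Finset (Fin n), IsCert f x S ∧ S.card = k}

/-- The weight of the subfunction `f|ρ`, where `ρ : Fin n → Option Bool` is a restriction:
the number of inputs consistent with `ρ` on which `f` outputs `true`. -/
def wtR {n : ℕ} (f : (Fin n → Bool) → Bool) (ρ : Fin n → Option Bool) : ℕ :=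
  (Finset.univ.filter fun x : Fin n → Bool =>
    f x = true ∧ ∀ i : Fin n, ∀ b : Bool, ρ i = some b → x i = b).card

/-- Number of coordinates fixed by a restriction. -/
def suppCard {n : ℕ} (ρ : Fin n → Option Bool) : ℕ :=
  (Finset.univ.filter fun i : Fin n => (ρ i).isSome).card

/-- The restriction given by the first `j` steps of a decision-tree path `L`. -/
def PathRho {n : ℕ} (L : List (Fin n × Bool)) (j : ℕ) : Fin n → Option Bool :=
  fun i => (L.take j).lookup i

/-- The path `L` is `δ`-parity with respect to `f`. -/
def DeltaParityPath {n : ℕ} (f : (Fin n → Bool) → Bool) (δ : ℝ)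
    (L : List (Fin n × Bool)) : Prop :=
  ∀ j : ℕ, 1 ≤ j → j ≤ L.length →
    (1/2) * (1 - δ) * (wtR f (PathRho L (j-1)) : ℝ) ≤ (wtR f (PathRho L j) : ℝ) ∧
    (wtR f (PathRho L j) : ℝ) ≤ (1/2) * (1 + δ) * (wtR f (PathRho L (j-1)) : ℝ)

/-- `f` is a `(t,δ)`-parity function: every path of length at most `t` is δ-parity. -/
def ParityFun {n : ℕ} (f : (Fin n → Bool) → Bool) (t : ℕ) (δ : ℝ) : Prop :=
  ∀ L : List (Fin n × Bool), (L.map Prod.fst).Nodup → L.length ≤ t → DeltaParityPath f δ L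

/-- The subfunction `f|ρ`, viewed as a function on the full cube. -/
def restrictFun {n : ℕ} (f : (Fin n → Bool) → Bool) (ρ : Fin n → Option Bool) :
    (Fin n → Bool) → Bool :=
  fun x => f fun i => (ρ i).getD (x i)

/-- Probability mass of the restriction `ρ` under the `p`-random restriction `R_p`. -/
noncomputable def rpMass {n : ℕ} (p : ℝ) (ρ : Fin n → Option Bool) : ℝ :=
  ∏ i : Fin n, if (ρ i).isSome then (1 - p) / 2 else p

/-- `f` is `λ`-critical. -/
def IsCritical {n : ℕ} (lam : ℝ) (f : (Fin n → Bool) → Bool) : Prop :=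
  ∀ p : ℝ, 0 ≤ p → p ≤ 1 → ∀ t : ℕ,
    (∑ ρ : Fin n → Option Bool,
      if t ≤ Dworst (restrictFun f ρ) then rpMass p ρ else 0) ≤ (p * lam) ^ t


section Stmt1Aux

open Finset Function

variable {n : ℕ}

/-- `g` depends only on coordinates in `L`. -/
def DepOn (g : (Fin n → Bool) → Bool) (L : List (Fin n)) : Prop :=
  ∀ x y : Fin n → Bool, (∀ i ∈ L, x i = y i) → g x = g y

lemma DepOn.child {g : (Fin n → Bool) → Bool} {i : Fin n} {is : List (Fin n)}
    (h : DepOn g (i :: is)) (b : Bool) :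
    DepOn (fun x => g (Function.update x i b)) is := by
  intro x y hxy
  apply h
  intro j hj
  rcases eq_or_ne j i with rfl | hne
  · simp
  · rw [Function.update_of_ne hne, Function.update_of_ne hne]
    exact hxy j ((List.mem_cons.mp hj).resolve_left hne)

/-- Build a decision tree querying the variables in `L` in order, stopping
when the restricted function is constant. -/
def buildT (g : (Fin n → Bool) → Bool) : List (Fin n) → DTree n
  | [] => .leaf (g (fun _ => false))
  | i :: is =>
    if ∀ x, g x = g (fun _ => false) then .leaf (g (fun _ => false))
    else .node i (buildT (fun x => g (Function.update x i false)) is)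
                 (buildT (fun x => g (Function.update x i true)) is)

lemma buildT_eval (L : List (Fin n)) (g : (Fin n → Bool) → Bool)
    (hdep : DepOn g L) (x : Fin n → Bool) : (buildT g L).eval x = g x := by
  induction L generalizing g x with
  | nil => exact hdep (fun _ => false) x (by simp)
  | cons i is ih =>
    rw [buildT]
    split
    · next h => simpa [DTree.eval] using (h x).symm
    · next h =>
      simp only [DTree.eval]
      cases hb : x i with
      | false =>
        rw [if_neg (by simp), ih _ (hdep.child false) x]
        rw [show Function.update x i false = x from by rw [← hb]; exact Function.update_eq_self i x]
      | true =>
        rw [if_pos rfl, ih _ (hdep.child true) x]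
        rw [show Function.update x i true = x from by rw [← hb]; exact Function.update_eq_self i x]

lemma buildT_cost_update (L : List (Fin n)) (g : (Fin n → Bool) → Bool)
    (i : Fin n) (hi : i ∉ L) (x : Fin n → Bool) (c : Bool) :
    (buildT g L).cost (Function.update x i c) = (buildT g L).cost x := by
  induction L generalizing g x with
  | nil => rfl
  | cons j is ih =>
    have hij : j ≠ i := by rintro rfl; exact hi List.mem_cons_self
    have his : i ∉ is := fun h => hi (List.mem_cons_of_mem _ h)
    rw [buildT]
    split
    · rfl
    · simp only [DTree.cost, Function.update_of_ne hij]
      rcases hb : x j <;> simp [hb, ih _ his]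

lemma sum_filter_flip {M : Type*} [AddCommMonoid M] (i : Fin n)
    (G : (Fin n → Bool) → M) (hG : ∀ x c, G (Function.update x i c) = G x) (b : Bool) :
    ∑ x ∈ univ.filter (fun x => x i = b), G x
      = ∑ x ∈ univ.filter (fun x => x i = !b), G x := by
  refine Finset.sum_nbij' (fun x => Function.update x i (!b))
    (fun x => Function.update x i b) ?_ ?_ ?_ ?_ ?_
  · intro a ha; simp
  · intro a ha; simp
  · intro a ha
    simp only [mem_filter, mem_univ, true_and] at ha
    show Function.update (Function.update a i (!b)) i b = a
    rw [Function.update_idem, ← ha]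
    exact Function.update_eq_self i a
  · intro a ha
    simp only [mem_filter, mem_univ, true_and] at ha
    show Function.update (Function.update a i b) i (!b) = a
    rw [Function.update_idem, ← ha]
    exact Function.update_eq_self i a
  · intro a ha; exact (hG a (!b)).symm

lemma sum_split_two {M : Type*} [AddCommMonoid M] (i : Fin n)
    (G : (Fin n → Bool) → M) (b : Bool) :
    ∑ x : Fin n → Bool, G x
      = ∑ x ∈ univ.filter (fun x => x i = b), G x
        + ∑ x ∈ univ.filter (fun x => x i = !b), G x := by
  rw [← Finset.sum_filter_add_sum_filter_not univ (fun x => x i = b) G]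
  congr 1
  apply Finset.sum_congr _ (fun _ _ => rfl)
  apply Finset.filter_congr
  intro x _
  cases b <;> simp

lemma sum_half (i : Fin n) (G : (Fin n → Bool) → ℝ)
    (hG : ∀ x c, G (Function.update x i c) = G x) (b : Bool) :
    ∑ x ∈ univ.filter (fun x => x i = b), G x = (∑ x : Fin n → Bool, G x) / 2 := by
  have h2 := sum_filter_flip i G hG b
  have h3 := sum_split_two i G b
  rw [h3, ← h2]
  ring

lemma wt_child (i : Fin n) (g : (Fin n → Bool) → Bool) (b : Bool) :
    wt (fun x => g (Function.update x i b))
      = 2 * (univ.filter (fun x : Fin n → Bool => x i = b ∧ g x = true)).card := by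
  have hG : ∀ (x : Fin n → Bool) (c : Bool),
      (if g (Function.update (Function.update x i c) i b) = true then 1 else 0)
        = (if g (Function.update x i b) = true then (1:ℕ) else 0) := by
    intro x c; rw [Function.update_idem]
  have hsplit := sum_split_two (M := ℕ) i
    (fun x => if g (Function.update x i b) = true then 1 else 0) b
  have hflip := sum_filter_flip (M := ℕ) i
    (fun x => if g (Function.update x i b) = true then 1 else 0) hG b
  rw [wt, Finset.card_filter, hsplit, ← hflip]
  have heq : ∀ x ∈ univ.filter (fun x : Fin n → Bool => x i = b),
      (if g (Function.update x i b) = true then (1:ℕ) else 0)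
        = (if g x = true then 1 else 0) := by
    intro x hx
    simp only [mem_filter, mem_univ, true_and] at hx
    rw [show Function.update x i b = x from by rw [← hx]; exact Function.update_eq_self i x]
  rw [Finset.sum_congr rfl heq, ← Finset.card_filter, Finset.filter_filter, two_mul]

lemma wt_split (i : Fin n) (g : (Fin n → Bool) → Bool) :
    wt (fun x => g (Function.update x i false)) + wt (fun x => g (Function.update x i true))
      = 2 * wt g := by
  rw [wt_child, wt_child, ← Nat.mul_add]
  congr 1
  have h1 : ∀ b : Bool, (univ.filter (fun x : Fin n → Bool => x i = b ∧ g x = true)).card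
      = ∑ x ∈ univ.filter (fun x : Fin n → Bool => x i = b), (if g x = true then 1 else 0) := by
    intro b
    rw [← Finset.filter_filter, Finset.card_filter]
  rw [h1, h1, wt, Finset.card_filter, sum_split_two (M := ℕ) i _ true]
  simp only [Bool.not_true]
  exact add_comm _ _

lemma wt_lower (L : List (Fin n)) (hnd : L.Nodup) (g : (Fin n → Bool) → Bool)
    (hdep : DepOn g L) (x : Fin n → Bool) (hx : g x = true) :
    2 ^ n ≤ wt g * 2 ^ L.length := by
  classical
  set s : Finset (Fin n) := L.toFinset with hs
  have hsc : s.card = L.length := List.toFinset_card_of_nodup hnd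
  have hscn : s.card ≤ n := by
    have := Finset.card_le_univ s
    simpa using this
  set η : ({ i : Fin n // i ∉ s } → Bool) → (Fin n → Bool) :=
    fun z j => if h : j ∈ s then x j else z ⟨j, h⟩ with hη
  have hinj : Function.Injective η := by
    intro z z' h
    funext j
    have := congrFun h j.1
    simpa [hη, j.2] using this
  have hmem : ∀ z, g (η z) = true := by
    intro z
    rw [← hx]
    apply hdep
    intro i hi
    show (if h : i ∈ s then x i else z ⟨i, h⟩) = x i
    rw [dif_pos (List.mem_toFinset.mpr hi)]
  have hcard : Fintype.card ({ i : Fin n // i ∉ s } → Bool) ≤ wt g := by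
    rw [wt]
    have := Finset.card_le_card_of_injOn η
      (s := (univ : Finset ({ i : Fin n // i ∉ s } → Bool)))
      (t := univ.filter (fun y : Fin n → Bool => g y = true))
      (fun z _ => by simp [hmem z]) (hinj.injOn)
    simpa using this
  have hcard2 : Fintype.card ({ i : Fin n // i ∉ s } → Bool) = 2 ^ (n - s.card) := by
    rw [Fintype.card_fun, Fintype.card_bool, Fintype.card_subtype_compl,
      Fintype.card_coe, Fintype.card_fin]
  calc 2 ^ n = 2 ^ (n - s.card) * 2 ^ L.length := by
        rw [← hsc, ← pow_add, Nat.sub_add_cancel hscn]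
    _ ≤ wt g * 2 ^ L.length := by
        apply Nat.mul_le_mul_right
        rw [← hcard2]; exact hcard

lemma min_avg (a b : ℝ) : min 1 a + min 1 b ≤ 2 * min 1 ((a + b) / 2) := by
  have h1 : min 1 a ≤ 1 := min_le_left _ _
  have h2 : min 1 a ≤ a := min_le_right _ _
  have h3 : min 1 b ≤ 1 := min_le_left _ _
  have h4 : min 1 b ≤ b := min_le_right _ _
  rcases min_cases 1 ((a + b) / 2) with ⟨h, _⟩ | ⟨h, _⟩ <;> rw [h] <;> linarith

lemma chord (u : ℝ) (h1 : 1 ≤ u) (h2 : u ≤ 2) : u ≤ 1 + Real.logb 2 u := by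
  have hconv := convexOn_exp.2 (Set.mem_univ (0 : ℝ)) (Set.mem_univ (Real.log 2))
    (show (0:ℝ) ≤ 2 - u by linarith) (show (0:ℝ) ≤ u - 1 by linarith)
    (show (2 - u) + (u - 1) = 1 by ring)
  simp only [smul_eq_mul, mul_zero, zero_add, Real.exp_zero, mul_one,
    Real.exp_log two_pos] at hconv
  have h3 : Real.exp ((u - 1) * Real.log 2) ≤ u := by linarith
  have h4 : (u - 1) * Real.log 2 ≤ Real.log u := by
    have := Real.log_le_log (Real.exp_pos _) h3
    rwa [Real.log_exp] at this
  have hlog2 : 0 < Real.log 2 := Real.log_pos (by norm_num)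
  have h5 : u - 1 ≤ Real.log u / Real.log 2 := (le_div_iff₀ hlog2).mpr h4
  rw [Real.logb]
  linarith

lemma sum_min_bound (W : ℕ) (hW : 1 ≤ W) (m : ℕ) :
    ∑ j ∈ range m, min 1 ((W : ℝ) / 2 ^ j) ≤ Real.logb 2 W + 2 := by
  set k := Nat.log 2 W with hk
  have hk1 : (2 : ℕ) ^ k ≤ W := Nat.pow_log_le_self 2 (by omega)
  have hk2 : W < 2 ^ (k + 1) := Nat.lt_pow_succ_log_self (by norm_num) W
  have hk1' : (2 : ℝ) ^ k ≤ (W : ℝ) := by exact_mod_cast hk1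
  have hk2' : (W : ℝ) ≤ 2 ^ (k + 1) := by exact_mod_cast hk2.le
  have hpow : (0 : ℝ) < 2 ^ k := by positivity
  -- step 1 : the sum is at most k + 1 + W / 2 ^ k
  have step1 : ∑ j ∈ range m, min 1 ((W : ℝ) / 2 ^ j) ≤ (k + 1 : ℝ) + (W : ℝ) / 2 ^ k := by
    rcases le_or_gt m (k + 1) with hm | hm
    · calc ∑ j ∈ range m, min 1 ((W : ℝ) / 2 ^ j) ≤ ∑ j ∈ range m, 1 :=
          Finset.sum_le_sum (fun j _ => min_le_left _ _)
        _ = (m : ℝ) := by simp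
        _ ≤ (k + 1 : ℝ) := by exact_mod_cast hm
        _ ≤ (k + 1 : ℝ) + (W : ℝ) / 2 ^ k := by
            have h0 : (0:ℝ) ≤ (W : ℝ) / 2 ^ k := by positivity
            linarith
    · rw [← Finset.sum_range_add_sum_Ico _ hm.le]
      have t1 : ∑ j ∈ range (k + 1), min 1 ((W : ℝ) / 2 ^ j) ≤ (k + 1 : ℝ) := by
        calc ∑ j ∈ range (k + 1), min 1 ((W : ℝ) / 2 ^ j) ≤ ∑ j ∈ range (k + 1), 1 :=
            Finset.sum_le_sum (fun j _ => min_le_left _ _)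
          _ = (k + 1 : ℝ) := by simp
      have t2 : ∑ j ∈ Finset.Ico (k + 1) m, min 1 ((W : ℝ) / 2 ^ j) ≤ (W : ℝ) / 2 ^ k := by
        calc ∑ j ∈ Finset.Ico (k + 1) m, min 1 ((W : ℝ) / 2 ^ j)
            ≤ ∑ j ∈ Finset.Ico (k + 1) m, (W : ℝ) * (1 / 2) ^ j := by
              apply Finset.sum_le_sum
              intro j _
              refine (min_le_right _ _).trans_eq ?_
              rw [div_pow, one_pow, mul_one_div]
          _ = (W : ℝ) * ∑ j ∈ Finset.Ico (k + 1) m, (1 / 2 : ℝ) ^ j := by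
              rw [Finset.mul_sum]
          _ = (W : ℝ) * ((1 / 2 : ℝ) ^ (k + 1) * ∑ j ∈ range (m - (k + 1)), (1 / 2 : ℝ) ^ j) := by
              rw [Finset.sum_Ico_eq_sum_range, Finset.mul_sum, Finset.mul_sum, Finset.mul_sum]
              apply Finset.sum_congr rfl
              intro j _
              rw [pow_add]
          _ ≤ (W : ℝ) * ((1 / 2 : ℝ) ^ (k + 1) * 2) := by
              have := sum_geometric_two_le (m - (k + 1))
              have h0 : (0 : ℝ) ≤ (W : ℝ) := by positivity
              have h00 : (0 : ℝ) ≤ (1 / 2 : ℝ) ^ (k + 1) := by positivity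
              apply mul_le_mul_of_nonneg_left _ h0
              exact mul_le_mul_of_nonneg_left this h00
          _ = (W : ℝ) / 2 ^ k := by
              rw [div_pow, one_pow, pow_succ]
              field_simp
      linarith
  -- step 2 : k + 1 + W / 2 ^ k ≤ logb 2 W + 2
  have hu1 : (1 : ℝ) ≤ (W : ℝ) / 2 ^ k := (one_le_div hpow).mpr hk1'
  have hu2 : (W : ℝ) / 2 ^ k ≤ 2 := by
    rw [div_le_iff₀ hpow]
    calc (W : ℝ) ≤ 2 ^ (k + 1) := hk2'
      _ = 2 * 2 ^ k := by rw [pow_succ]; ring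
  have hch := chord _ hu1 hu2
  have hlogW : Real.logb 2 (W : ℝ) = (k : ℝ) + Real.logb 2 ((W : ℝ) / 2 ^ k) := by
    have hW0 : (W : ℝ) ≠ 0 := by positivity
    have h22 : Real.logb 2 2 = 1 := by simp
    rw [Real.logb_div hW0 (by positivity), Real.logb_pow, h22]
    ring
  rw [hlogW]
  linarith

lemma buildT_cost_bound (L : List (Fin n)) (hnd : L.Nodup) (g : (Fin n → Bool) → Bool)
    (hdep : DepOn g L) :
    ∑ x : Fin n → Bool, ((buildT g L).cost x : ℝ)
      ≤ 2 ^ n * ∑ j ∈ range L.length,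
          min 1 ((wt g : ℝ) * 2 ^ L.length / 2 ^ n / 2 ^ j) := by
  induction L generalizing g with
  | nil => simp [buildT, DTree.cost]
  | cons i is ih =>
    have hi : i ∉ is := (List.nodup_cons.mp hnd).1
    have hnd' : is.Nodup := (List.nodup_cons.mp hnd).2
    rw [buildT]
    split
    · next h =>
      simp only [DTree.cost, Nat.cast_zero, Finset.sum_const, smul_zero]
      apply mul_nonneg (by positivity)
      apply Finset.sum_nonneg
      intro j _
      exact le_min (by norm_num) (by positivity)
    · next h =>
      -- nonconstant case
      obtain ⟨x0, hx0⟩ : ∃ x0, g x0 = true := by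
        push_neg at h
        obtain ⟨y, hy⟩ := h
        cases hgd : g (fun _ => false) with
        | true => exact ⟨_, hgd⟩
        | false => cases hgy : g y with
          | true => exact ⟨_, hgy⟩
          | false => exact absurd (hgy.trans hgd.symm) hy
      set g0 : (Fin n → Bool) → Bool := fun x => g (Function.update x i false) with hg0
      set g1 : (Fin n → Bool) → Bool := fun x => g (Function.update x i true) with hg1
      set T0 := buildT g0 is with hT0
      set T1 := buildT g1 is with hT1
      set m := is.length with hm
      -- the cost sum splits
      have hcostsum : ∑ x : Fin n → Bool, ((DTree.node i T0 T1).cost x : ℝ)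
          = 2 ^ n + ((∑ x : Fin n → Bool, (T0.cost x : ℝ))
              + (∑ x : Fin n → Bool, (T1.cost x : ℝ))) / 2 := by
        have e1 : ∀ x : Fin n → Bool, ((DTree.node i T0 T1).cost x : ℝ)
            = 1 + if x i then (T1.cost x : ℝ) else (T0.cost x : ℝ) := by
          intro x
          simp only [DTree.cost]
          push_cast
          split <;> ring
        rw [Finset.sum_congr rfl (fun x _ => e1 x), Finset.sum_add_distrib]
        congr 1
        · simp [Fintype.card_fun]
        · rw [Finset.sum_ite]
          have hh1 : univ.filter (fun x : Fin n → Bool => ¬(x i = true))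
              = univ.filter (fun x : Fin n → Bool => x i = false) := by
            apply Finset.filter_congr
            intro x _
            simp
          rw [hh1]
          have hs1 : ∑ x ∈ univ.filter (fun x : Fin n → Bool => x i = true), (T1.cost x : ℝ)
              = (∑ x : Fin n → Bool, (T1.cost x : ℝ)) / 2 :=
            sum_half i _ (fun x c => by rw [hT1, buildT_cost_update is g1 i hi x c]) true
          have hs0 : ∑ x ∈ univ.filter (fun x : Fin n → Bool => x i = false), (T0.cost x : ℝ)
              = (∑ x : Fin n → Bool, (T0.cost x : ℝ)) / 2 :=
            sum_half i _ (fun x c => by rw [hT0, buildT_cost_update is g0 i hi x c]) false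
          rw [hs1, hs0]
          ring
      rw [hcostsum]
      -- weights
      have hWsplit : (wt g0 : ℝ) + (wt g1 : ℝ) = 2 * (wt g : ℝ) := by
        exact_mod_cast congrArg (Nat.cast (R := ℝ)) (wt_split i g)
      have hWlow : (2 : ℝ) ^ n ≤ (wt g : ℝ) * 2 ^ (m + 1) := by
        have := wt_lower (i :: is) hnd g hdep x0 hx0
        exact_mod_cast this
      have hbig : (1 : ℝ) ≤ (wt g : ℝ) * 2 ^ (m + 1) / 2 ^ n := by
        rw [le_div_iff₀ (by positivity)]
        linarith
      have key : (∑ j ∈ range m, min 1 ((wt g0 : ℝ) * 2 ^ m / 2 ^ n / 2 ^ j))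
            + (∑ j ∈ range m, min 1 ((wt g1 : ℝ) * 2 ^ m / 2 ^ n / 2 ^ j))
          ≤ 2 * ∑ j ∈ range m, min 1 ((wt g : ℝ) * 2 ^ (m + 1) / 2 ^ n / 2 ^ (j + 1)) := by
        rw [← Finset.sum_add_distrib, Finset.mul_sum]
        apply Finset.sum_le_sum
        intro j _
        have hav := min_avg ((wt g0 : ℝ) * 2 ^ m / 2 ^ n / 2 ^ j)
          ((wt g1 : ℝ) * 2 ^ m / 2 ^ n / 2 ^ j)
        have heq : ((wt g0 : ℝ) * 2 ^ m / 2 ^ n / 2 ^ j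
            + (wt g1 : ℝ) * 2 ^ m / 2 ^ n / 2 ^ j) / 2
            = (wt g : ℝ) * 2 ^ (m + 1) / 2 ^ n / 2 ^ (j + 1) := by
          have e : (wt g0 : ℝ) * 2 ^ m / 2 ^ n / 2 ^ j + (wt g1 : ℝ) * 2 ^ m / 2 ^ n / 2 ^ j
              = ((wt g0 : ℝ) + (wt g1 : ℝ)) * (2 ^ m / 2 ^ n / 2 ^ j) := by ring
          rw [e, hWsplit, pow_succ, pow_succ]
          ring
        rw [← heq]
        exact hav
      calc (2 : ℝ) ^ n + ((∑ x : Fin n → Bool, (T0.cost x : ℝ))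
              + (∑ x : Fin n → Bool, (T1.cost x : ℝ))) / 2
          ≤ 2 ^ n + ((2 ^ n * ∑ j ∈ range m, min 1 ((wt g0 : ℝ) * 2 ^ m / 2 ^ n / 2 ^ j))
              + (2 ^ n * ∑ j ∈ range m, min 1 ((wt g1 : ℝ) * 2 ^ m / 2 ^ n / 2 ^ j))) / 2 := by
            have b0 := ih hnd' g0 (hdep.child false)
            have b1 := ih hnd' g1 (hdep.child true)
            rw [← hT0] at b0
            rw [← hT1] at b1
            linarith
        _ = 2 ^ n * (1 + ((∑ j ∈ range m, min 1 ((wt g0 : ℝ) * 2 ^ m / 2 ^ n / 2 ^ j))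
              + (∑ j ∈ range m, min 1 ((wt g1 : ℝ) * 2 ^ m / 2 ^ n / 2 ^ j))) / 2) := by ring
        _ ≤ 2 ^ n * (1 + ∑ j ∈ range m, min 1 ((wt g : ℝ) * 2 ^ (m + 1) / 2 ^ n / 2 ^ (j + 1))) := by
            have hp : (0:ℝ) ≤ 2 ^ n := by positivity
            apply mul_le_mul_of_nonneg_left _ hp
            linarith
        _ = 2 ^ n * ∑ j ∈ range (m + 1), min 1 ((wt g : ℝ) * 2 ^ (m + 1) / 2 ^ n / 2 ^ j) := by
            rw [Finset.sum_range_succ']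
            have : min 1 ((wt g : ℝ) * 2 ^ (m + 1) / 2 ^ n / 2 ^ 0) = 1 := by
              rw [pow_zero, div_one]
              exact min_eq_left hbig
            rw [this]
            ring
        _ = 2 ^ n * ∑ j ∈ range (i :: is).length,
              min 1 ((wt g : ℝ) * 2 ^ (i :: is).length / 2 ^ n / 2 ^ j) := by
            simp [hm]

end Stmt1Aux

theorem stmt1 (n : ℕ) (f : (Fin n → Bool) → Bool) (hf : ∃ x, f x = true) :
    Dave f ≤ Real.logb 2 (wt f) + 2 := by
  classical
  set T := buildT f (List.finRange n) with hT
  have hdep : DepOn f (List.finRange n) := by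
    intro x y h
    have : x = y := funext fun i => h i (List.mem_finRange i)
    rw [this]
  have hcomp : Computes T f := fun x => buildT_eval _ f hdep x
  have hcost := buildT_cost_bound (List.finRange n) (List.nodup_finRange n) f hdep
  rw [List.length_finRange] at hcost
  have hW : 1 ≤ wt f := by
    obtain ⟨x, hx⟩ := hf
    refine Finset.card_pos.mpr ⟨x, ?_⟩
    simp [wt, hx]
  have havg : avgCost T ≤ Real.logb 2 (wt f) + 2 := by
    rw [avgCost, div_le_iff₀ (by positivity : (0:ℝ) < 2 ^ n)]
    calc ∑ x : Fin n → Bool, (T.cost x : ℝ)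
        ≤ 2 ^ n * ∑ j ∈ Finset.range n, min 1 ((wt f : ℝ) * 2 ^ n / 2 ^ n / 2 ^ j) := by
          rw [hT]; exact hcost
      _ = 2 ^ n * ∑ j ∈ Finset.range n, min 1 ((wt f : ℝ) / 2 ^ j) := by
          congr 1
          apply Finset.sum_congr rfl
          intro j _
          congr 1
          rw [mul_div_assoc, div_self (by positivity : (2:ℝ) ^ n ≠ 0), mul_one]
      _ ≤ 2 ^ n * (Real.logb 2 (wt f) + 2) := by
          apply mul_le_mul_of_nonneg_left (sum_min_bound (wt f) hW n) (by positivity)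
      _ = (Real.logb 2 (wt f) + 2) * 2 ^ n := mul_comm _ _
  have hbdd : BddBelow {c : ℝ | ∃ T' : DTree n, Computes T' f ∧ avgCost T' = c} := by
    refine ⟨0, ?_⟩
    rintro c ⟨T', -, rfl⟩
    rw [avgCost]
    positivity
  have hmem : avgCost T ∈ {c : ℝ | ∃ T' : DTree n, Computes T' f ∧ avgCost T' = c} :=
    ⟨T, hcomp, rfl⟩
  exact (csInf_le hbdd hmem).trans havg
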